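/- Let d ≥ 2, γ ∈ ((d-1)/d, 1), and m ∈ ℕ with mγ ≥ 1, m(1−γ) ≥ 4. With the sawtooth function f and a_{n,k} as above, define Ω := {(x',x_d) : x' ∈ (0,1)^{d-1}, 0 ≤ x_d < f(x')} ∪ ((−2,2)^{d-1} × (−2,0)) and u_{n,k}(x) := sin(2^{γmn}(x_d − a_{n,k})) for x' ∈ Q(n,k) and x_d ≥ a_{n,k}, and u_{n,k}(x) := 0 otherwise. Then ∫_Ω |u_{n,k}|² ≥ b₂·2^{−(d−1)mn}·2^{−γmn} and ∫_Ω |∇u_{n,k}|² ≤ b_∇·2^{−(d−1)mn}·2^{γmn}, where b₂ = 2^{−(d−1)}∫₀^{1/8}|sin t|² dt and b_∇ = ∫₀¹ |cos t|² dt. -/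

import Mathlib

/-- The tent function `ψ(x') = (1/2 − ‖x' − (1/2,…,1/2)‖_∞)·1_{(0,1)^{n}}(x')`
(the norm on `Fin n → ℝ` is the sup norm). -/
noncomputable def sawPsi (n : ℕ) (x : Fin n → ℝ) : ℝ :=
  Set.indicator {y : Fin n → ℝ | ∀ i, 0 < y i ∧ y i < 1}
    (fun y => 1 / 2 - ‖y - fun _ => (1 / 2 : ℝ)‖) x

/-- `g_j(x') = Σ_{k ∈ {0,…,2^{jm}−1}^{n}} ψ(2^{jm}·x' − k)`. -/
noncomputable def sawG (n m j : ℕ) (x : Fin n → ℝ) : ℝ :=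
  ∑ k : Fin n → Fin (2 ^ (j * m)),
    sawPsi n (fun i => 2 ^ (j * m) * x i - (k i : ℝ))

/-- Partial sum `f_{N−1}(x') = Σ_{j=0}^{N−1} 2^{−γjm}·g_j(x')` (so `sawF n m γ 0 = f_{−1} ≡ 0`). -/
noncomputable def sawFpartial (n m : ℕ) (γ : ℝ) (N : ℕ) (x : Fin n → ℝ) : ℝ :=
  ∑ j ∈ Finset.range N, (2 : ℝ) ^ (-(γ * ((j : ℝ) * m))) * sawG n m j x

/-- The sawtooth boundary function `f(x') = Σ_{j=0}^∞ 2^{−γjm}·g_j(x')`. -/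
noncomputable def sawF (n m : ℕ) (γ : ℝ) (x : Fin n → ℝ) : ℝ :=
  ∑' j : ℕ, (2 : ℝ) ^ (-(γ * ((j : ℝ) * m))) * sawG n m j x

/-- The dyadic subcube `Q(n,k) = {x' : 2^{nm}·x' − k ∈ (0,1)^{d-1}}`. -/
def sawQ (dd m n : ℕ) (k : Fin dd → Fin (2 ^ (n * m))) : Set (Fin dd → ℝ) :=
  {x | ∀ i, (k i : ℝ) < 2 ^ (n * m) * x i ∧ 2 ^ (n * m) * x i < (k i : ℝ) + 1}

/-- `a_{n,k} = sup_{x' ∈ Q(n,k)} f_{n−1}(x')`. -/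
noncomputable def sawA (dd m : ℕ) (γ : ℝ) (n : ℕ) (k : Fin dd → Fin (2 ^ (n * m))) : ℝ :=
  sSup (sawFpartial dd m γ n '' sawQ dd m n k)

open MeasureTheory

/-- The Hölder domain `Ω` of the counterexample: the subgraph of the sawtooth
function `f` over `(0,1)^{d-1}` together with the box `(−2,2)^{d-1} × (−2,0)`. -/
def sawOmega (dd m : ℕ) (γ : ℝ) : Set ((Fin dd → ℝ) × ℝ) :=
  {p | ((∀ i, 0 < p.1 i ∧ p.1 i < 1) ∧ 0 ≤ p.2 ∧ p.2 < sawF dd m γ p.1) ∨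
       ((∀ i, -2 < p.1 i ∧ p.1 i < 2) ∧ -2 < p.2 ∧ p.2 < 0)}

/-- The test function `u_{n,k}(x) = sin(2^{γmn}(x_d − a_{n,k}))` for
`x' ∈ Q(n,k)`, `x_d ≥ a_{n,k}`, and `0` otherwise. -/
noncomputable def sawU (dd m : ℕ) (γ : ℝ) (n : ℕ) (k : Fin dd → Fin (2 ^ (n * m)))
    (p : (Fin dd → ℝ) × ℝ) : ℝ :=
  Set.indicator {q : (Fin dd → ℝ) × ℝ | q.1 ∈ sawQ dd m n k ∧ sawA dd m γ n k ≤ q.2}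
    (fun q => Real.sin ((2 : ℝ) ^ (γ * ((m : ℝ) * n)) * (q.2 - sawA dd m γ n k))) p

/-- The (a.e.) gradient of `u_{n,k}`: it points in the `x_d` direction with
magnitude `2^{γmn}·cos(2^{γmn}(x_d − a_{n,k}))` on the support of `u_{n,k}`. -/
noncomputable def sawGradU (dd m : ℕ) (γ : ℝ) (n : ℕ) (k : Fin dd → Fin (2 ^ (n * m)))
    (p : (Fin dd → ℝ) × ℝ) : ℝ :=
  Set.indicator {q : (Fin dd → ℝ) × ℝ | q.1 ∈ sawQ dd m n k ∧ sawA dd m γ n k ≤ q.2}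
    (fun q => (2 : ℝ) ^ (γ * ((m : ℝ) * n)) *
      Real.cos ((2 : ℝ) ^ (γ * ((m : ℝ) * n)) * (q.2 - sawA dd m γ n k))) p

namespace SawAux

lemma psi_eq (N : ℕ) (y : Fin N → ℝ) :
    sawPsi N y = max (1 / 2 - ‖y - fun _ => (1 / 2 : ℝ)‖) 0 := by
  by_cases h : y ∈ {y : Fin N → ℝ | ∀ i, 0 < y i ∧ y i < 1}
  · rw [sawPsi, Set.indicator_of_mem h]
    refine (max_eq_left ?_).symm
    have hn : ‖y - fun _ => (1 / 2 : ℝ)‖ ≤ 1 / 2 := by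
      rw [pi_norm_le_iff_of_nonneg (by norm_num)]
      intro i
      have hi := h i
      simp only [Pi.sub_apply, Real.norm_eq_abs, abs_le]
      constructor <;> linarith [hi.1, hi.2]
    linarith
  · rw [sawPsi, Set.indicator_of_notMem h]
    refine (max_eq_right ?_).symm
    have : ∃ i, ¬(0 < y i ∧ y i < 1) := by
      by_contra hc; push_neg at hc; exact h (fun i => hc i)
    obtain ⟨i, hi⟩ := this
    have h1 : (1 : ℝ) / 2 ≤ |y i - 1 / 2| := by
      rcases not_and_or.1 hi with h' | h'
      · push_neg at h'; exact le_abs.2 (Or.inr (by linarith))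
      · push_neg at h'; exact le_abs.2 (Or.inl (by linarith))
    have h2 : |y i - 1 / 2| ≤ ‖y - fun _ => (1 / 2 : ℝ)‖ := by
      have := norm_le_pi_norm (y - fun _ => (1 / 2 : ℝ)) i
      simpa [Real.norm_eq_abs] using this
    linarith

lemma psi_nonneg (N : ℕ) (y : Fin N → ℝ) : 0 ≤ sawPsi N y := by
  rw [psi_eq]; exact le_max_right _ _

lemma psi_le_half (N : ℕ) (y : Fin N → ℝ) : sawPsi N y ≤ 1 / 2 := by
  rw [psi_eq]
  exact max_le (by linarith [norm_nonneg (y - fun _ => (1 / 2 : ℝ))]) (by norm_num)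

lemma psi_lip (N : ℕ) (x y : Fin N → ℝ) : |sawPsi N x - sawPsi N y| ≤ ‖x - y‖ := by
  rw [psi_eq, psi_eq]
  refine le_trans (abs_max_sub_max_le_abs _ _ _) ?_
  have h1 : (1 / 2 - ‖x - fun _ => (1 / 2 : ℝ)‖) - (1 / 2 - ‖y - fun _ => (1 / 2 : ℝ)‖)
      = ‖y - fun _ => (1 / 2 : ℝ)‖ - ‖x - fun _ => (1 / 2 : ℝ)‖ := by ring
  rw [h1]
  have := abs_norm_sub_norm_le (y - fun _ => (1 / 2 : ℝ)) (x - fun _ => (1 / 2 : ℝ))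
  rw [sub_sub_sub_cancel_right] at this
  exact this.trans (le_of_eq (norm_sub_rev _ _))

lemma psi_continuous (N : ℕ) : Continuous (sawPsi N) := by
  have : sawPsi N = fun y => max (1 / 2 - ‖y - fun _ => (1 / 2 : ℝ)‖) 0 :=
    funext (psi_eq N)
  rw [this]
  exact (continuous_const.sub ((continuous_id.sub continuous_const).norm)).max continuous_const

lemma psi_ne_zero (N : ℕ) {y : Fin N → ℝ} (h : sawPsi N y ≠ 0) : ∀ i, 0 < y i ∧ y i < 1 := by
  by_contra hc
  exact h (Set.indicator_of_notMem
    (s := {y : Fin N → ℝ | ∀ i, 0 < y i ∧ y i < 1}) hc _)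

lemma sawG_nonneg (dd m j : ℕ) (x : Fin dd → ℝ) : 0 ≤ sawG dd m j x :=
  Finset.sum_nonneg fun _ _ => psi_nonneg _ _

lemma sawG_continuous (dd m j : ℕ) : Continuous (sawG dd m j) := by
  refine continuous_finset_sum _ (fun k _ => ?_)
  exact (psi_continuous dd).comp (by continuity)

/-- If one term of the sum defining `sawG` is nonzero, the corresponding cell bounds hold. -/
lemma bounds_of_ne_zero {dd m j : ℕ} {x : Fin dd → ℝ} {k' : Fin dd → Fin (2 ^ (j * m))}
    (h : sawPsi dd (fun i => 2 ^ (j * m) * x i - (k' i : ℝ)) ≠ 0) :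
    ∀ i, (k' i : ℝ) < 2 ^ (j * m) * x i ∧ 2 ^ (j * m) * x i < (k' i : ℝ) + 1 := by
  intro i
  have := psi_ne_zero dd h i
  constructor <;> linarith [this.1, this.2]

/-- Collapse of the sum defining `sawG` to the single active cell. -/
lemma sawG_collapse {dd m j : ℕ} {x : Fin dd → ℝ} (k₀ : Fin dd → Fin (2 ^ (j * m)))
    (hk₀ : ∀ i, (k₀ i : ℝ) < 2 ^ (j * m) * x i ∧ 2 ^ (j * m) * x i < (k₀ i : ℝ) + 1) :
    sawG dd m j x = sawPsi dd (fun i => 2 ^ (j * m) * x i - (k₀ i : ℝ)) := by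
  refine Finset.sum_eq_single k₀ (fun b _ hb => ?_) (fun h => absurd (Finset.mem_univ k₀) h)
  by_contra hb0
  apply hb
  funext i
  have h1 := bounds_of_ne_zero hb0 i
  have h2 := hk₀ i
  have e1 : ((b i : ℕ) : ℝ) < ((k₀ i : ℕ) : ℝ) + 1 := by
    have := lt_trans h1.1 h2.2; exact_mod_cast this
  have e2 : ((k₀ i : ℕ) : ℝ) < ((b i : ℕ) : ℝ) + 1 := by
    have := lt_trans h2.1 h1.2; exact_mod_cast this
  have n1 : (b i : ℕ) < (k₀ i : ℕ) + 1 := by exact_mod_cast e1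
  have n2 : (k₀ i : ℕ) < (b i : ℕ) + 1 := by exact_mod_cast e2
  exact Fin.ext (by omega)

lemma sawG_le_half (dd m j : ℕ) (x : Fin dd → ℝ) : sawG dd m j x ≤ 1 / 2 := by
  by_cases hex : ∃ k' : Fin dd → Fin (2 ^ (j * m)),
      sawPsi dd (fun i => 2 ^ (j * m) * x i - (k' i : ℝ)) ≠ 0
  · obtain ⟨k₀, hk₀⟩ := hex
    rw [sawG_collapse k₀ (bounds_of_ne_zero hk₀)]
    exact psi_le_half _ _
  · push_neg at hex
    rw [sawG]
    rw [Finset.sum_eq_zero (fun k' _ => hex k')]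
    norm_num

end SawAux

namespace SawAux

lemma mem_Q_unit {dd m n : ℕ} {k : Fin dd → Fin (2 ^ (n * m))} {x : Fin dd → ℝ}
    (hx : x ∈ sawQ dd m n k) (i : Fin dd) : 0 < x i ∧ x i < 1 := by
  have h := hx i
  have hc : (0:ℝ) < 2 ^ (n*m) := by positivity
  have hk0 : (0:ℝ) ≤ (k i : ℝ) := Nat.cast_nonneg _
  have hk1 : ((k i : ℕ) : ℝ) + 1 ≤ 2 ^ (n*m) := by
    have h' : (k i : ℕ) + 1 ≤ 2 ^ (n*m) := (k i).is_lt
    exact_mod_cast h'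
  constructor
  · nlinarith [h.1]
  · nlinarith [h.2]

def sawK (dd m n j : ℕ) (hj : j ≤ n) (k : Fin dd → Fin (2 ^ (n * m))) (i : Fin dd) :
    Fin (2 ^ (j * m)) :=
  ⟨(k i : ℕ) / 2 ^ ((n - j) * m), by
    have hq : 0 < 2 ^ ((n - j) * m) := Nat.pow_pos (by norm_num)
    rw [Nat.div_lt_iff_lt_mul hq]
    have he : j * m + (n - j) * m = n * m := by
      rw [← Nat.add_mul]; congr 1; omega
    calc (k i : ℕ) < 2 ^ (n * m) := (k i).is_lt
      _ ≤ 2 ^ (j * m) * 2 ^ ((n - j) * m) := le_of_eq (by rw [← pow_add, he])⟩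

lemma scale_bounds {dd m n j : ℕ} {k : Fin dd → Fin (2 ^ (n * m))} {x : Fin dd → ℝ}
    (hj : j ≤ n) (hx : x ∈ sawQ dd m n k) (i : Fin dd) :
    ((sawK dd m n j hj k i : ℕ) : ℝ) < 2 ^ (j * m) * x i ∧
      2 ^ (j * m) * x i < ((sawK dd m n j hj k i : ℕ) : ℝ) + 1 := by
  set q : ℕ := 2 ^ ((n - j) * m) with hq_def
  have hq : 0 < q := Nat.pow_pos (by norm_num)
  have hqR : (0:ℝ) < (q:ℝ) := by exact_mod_cast hq
  have hsplit : (2:ℝ) ^ (n * m) = (q:ℝ) * 2 ^ (j * m) := by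
    rw [hq_def]; push_cast
    rw [← pow_add]
    congr 1
    rw [← Nat.add_mul]; congr 1; omega
  have h := hx i
  have hKval : ((sawK dd m n j hj k i : ℕ)) = (k i : ℕ) / q := rfl
  have h1 : ((k i : ℕ) / q) * q ≤ (k i : ℕ) := Nat.div_mul_le_self _ _
  have h2 : (k i : ℕ) < (k i : ℕ) / q * q + q := Nat.lt_div_mul_add hq
  have h1R : (((k i : ℕ) / q : ℕ) : ℝ) * q ≤ ((k i : ℕ) : ℝ) := by exact_mod_cast h1
  have h2R : ((k i : ℕ) : ℝ) + 1 ≤ (((k i : ℕ) / q : ℕ) : ℝ) * q + q := by exact_mod_cast h2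
  rw [hsplit] at h
  constructor
  · rw [hKval]
    have hlt : (((k i : ℕ) / q : ℕ) : ℝ) * q < (2 ^ (j * m) * x i) * q := by
      nlinarith [h.1]
    exact lt_of_mul_lt_mul_right hlt hqR.le
  · rw [hKval]
    have hlt : (2 ^ (j * m) * x i) * q < ((((k i : ℕ) / q : ℕ) : ℝ) + 1) * q := by
      nlinarith [h.2]
    exact lt_of_mul_lt_mul_right hlt hqR.le

lemma sawG_eq_on {dd m n j : ℕ} {k : Fin dd → Fin (2 ^ (n * m))} {x : Fin dd → ℝ}
    (hj : j ≤ n) (hx : x ∈ sawQ dd m n k) :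
    sawG dd m j x = sawPsi dd (fun i => 2 ^ (j * m) * x i - ((sawK dd m n j hj k i : ℕ) : ℝ)) :=
  sawG_collapse _ (scale_bounds hj hx)

lemma sawG_middle {dd m n : ℕ} {k : Fin dd → Fin (2 ^ (n * m))} {x : Fin dd → ℝ}
    (hx : ∀ i, (k i : ℝ) + 1/4 < 2 ^ (n * m) * x i ∧ 2 ^ (n * m) * x i < (k i : ℝ) + 3/4) :
    1/4 ≤ sawG dd m n x := by
  have hb : ∀ i, (k i : ℝ) < 2 ^ (n * m) * x i ∧ 2 ^ (n * m) * x i < (k i : ℝ) + 1 :=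
    fun i => ⟨by linarith [(hx i).1], by linarith [(hx i).2]⟩
  rw [sawG_collapse k hb, psi_eq]
  have hn : ‖(fun i => 2 ^ (n * m) * x i - (k i : ℝ)) - fun _ => (1/2:ℝ)‖ ≤ 1/4 := by
    rw [pi_norm_le_iff_of_nonneg (by norm_num)]
    intro i
    simp only [Pi.sub_apply, Real.norm_eq_abs, abs_le]
    constructor <;> linarith [(hx i).1, (hx i).2]
  refine le_trans ?_ (le_max_left _ _)
  linarith

section Osc

variable {dd m n : ℕ} {γ : ℝ} {k : Fin dd → Fin (2 ^ (n * m))}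

lemma rpow_pow_id (γ : ℝ) (m j : ℕ) :
    (2:ℝ) ^ (-(γ * ((j:ℝ) * m))) * (2:ℝ) ^ (j * m : ℕ) =
      ((2:ℝ) ^ ((1 - γ) * (m:ℝ))) ^ j := by
  rw [← Real.rpow_natCast (2:ℝ) (j * m), ← Real.rpow_add two_pos,
    ← Real.rpow_natCast ((2:ℝ) ^ ((1 - γ) * (m:ℝ))) j,
    ← Real.rpow_mul (by norm_num : (0:ℝ) ≤ 2)]
  congr 1
  push_cast
  ring

lemma rpow_geom_id (γ : ℝ) (m j : ℕ) :
    (2:ℝ) ^ (-(γ * ((j:ℝ) * m))) = ((2:ℝ) ^ (-(γ * (m:ℝ)))) ^ j := by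
  rw [← Real.rpow_natCast ((2:ℝ) ^ (-(γ * (m:ℝ)))) j,
    ← Real.rpow_mul (by norm_num : (0:ℝ) ≤ 2)]
  congr 1
  ring

lemma Rn_cinv (γ : ℝ) (m n : ℕ) :
    ((2:ℝ) ^ ((1 - γ) * (m:ℝ))) ^ n * ((2:ℝ) ^ (n * m : ℕ))⁻¹ =
      (2:ℝ) ^ (-(γ * ((m:ℝ) * n))) := by
  rw [← Real.rpow_natCast ((2:ℝ) ^ ((1 - γ) * (m:ℝ))) n,
    ← Real.rpow_mul (by norm_num : (0:ℝ) ≤ 2),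
    ← Real.rpow_natCast (2:ℝ) (n * m), ← Real.rpow_neg (by norm_num : (0:ℝ) ≤ 2),
    ← Real.rpow_add two_pos]
  congr 1
  push_cast
  ring

lemma partial_osc (hγ2 : γ < 1) (hm2 : 4 ≤ (m:ℝ) * (1 - γ))
    {x y : Fin dd → ℝ} (hx : x ∈ sawQ dd m n k) (hy : y ∈ sawQ dd m n k) :
    sawFpartial dd m γ n x - sawFpartial dd m γ n y ≤
      (1/15) * (2:ℝ) ^ (-(γ * ((m:ℝ) * n))) := by
  set R : ℝ := (2:ℝ) ^ ((1 - γ) * (m:ℝ)) with hR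
  have hRpos : 0 < R := Real.rpow_pos_of_pos two_pos _
  have hR16 : (16:ℝ) ≤ R := by
    rw [hR, show (16:ℝ) = (2:ℝ) ^ (4:ℝ) by
      rw [show (4:ℝ) = ((4:ℕ):ℝ) by norm_num, Real.rpow_natCast]; norm_num]
    exact (Real.rpow_le_rpow_left_iff one_lt_two).2 (by linarith)
  have hc : (0:ℝ) < 2 ^ (n * m) := by positivity
  have hcc : (2 ^ (n * m) : ℝ) * ((2:ℝ) ^ (n * m))⁻¹ = 1 := mul_inv_cancel₀ (ne_of_gt hc)
  have hxy : ‖x - y‖ ≤ ((2:ℝ) ^ (n * m))⁻¹ := by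
    rw [pi_norm_le_iff_of_nonneg (by positivity)]
    intro i
    have hxi := hx i
    have hyi := hy i
    simp only [Pi.sub_apply, Real.norm_eq_abs, abs_le]
    constructor
    · nlinarith [hxi.1, hyi.2]
    · nlinarith [hxi.2, hyi.1]
  have key : ∀ j ∈ Finset.range n,
      (2:ℝ) ^ (-(γ * ((j:ℝ) * m))) * sawG dd m j x
        - (2:ℝ) ^ (-(γ * ((j:ℝ) * m))) * sawG dd m j y
        ≤ R ^ j * ((2:ℝ) ^ (n * m))⁻¹ := by
    intro j hj
    have hjn : j ≤ n := le_of_lt (Finset.mem_range.1 hj)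
    rw [sawG_eq_on hjn hx, sawG_eq_on (k := k) hjn hy, ← mul_sub]
    have hw : (0:ℝ) ≤ (2:ℝ) ^ (-(γ * ((j:ℝ) * m))) := (Real.rpow_pos_of_pos two_pos _).le
    have hlip := psi_lip dd (fun i => 2 ^ (j * m) * x i - ((sawK dd m n j hjn k i : ℕ) : ℝ))
      (fun i => 2 ^ (j * m) * y i - ((sawK dd m n j hjn k i : ℕ) : ℝ))
    have harg : (fun i => 2 ^ (j * m) * x i - ((sawK dd m n j hjn k i : ℕ) : ℝ))
        - (fun i => 2 ^ (j * m) * y i - ((sawK dd m n j hjn k i : ℕ) : ℝ))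
        = ((2:ℝ) ^ (j * m)) • (x - y) := by
      funext i
      simp only [Pi.sub_apply, Pi.smul_apply, smul_eq_mul]
      ring
    rw [harg, norm_smul, Real.norm_eq_abs, abs_of_pos (by positivity : (0:ℝ) < (2:ℝ) ^ (j * m))]
      at hlip
    have hdiff : sawPsi dd (fun i => 2 ^ (j * m) * x i - ((sawK dd m n j hjn k i : ℕ) : ℝ))
        - sawPsi dd (fun i => 2 ^ (j * m) * y i - ((sawK dd m n j hjn k i : ℕ) : ℝ))
        ≤ (2:ℝ) ^ (j * m) * ((2:ℝ) ^ (n * m))⁻¹ := by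
      have h1 := le_abs_self (sawPsi dd (fun i => 2 ^ (j * m) * x i
        - ((sawK dd m n j hjn k i : ℕ) : ℝ))
        - sawPsi dd (fun i => 2 ^ (j * m) * y i - ((sawK dd m n j hjn k i : ℕ) : ℝ)))
      have h2 : (2:ℝ) ^ (j * m) * ‖x - y‖ ≤ (2:ℝ) ^ (j * m) * ((2:ℝ) ^ (n * m))⁻¹ :=
        mul_le_mul_of_nonneg_left hxy (by positivity)
      linarith
    calc (2:ℝ) ^ (-(γ * ((j:ℝ) * m))) * (sawPsi dd _ - sawPsi dd _)
        ≤ (2:ℝ) ^ (-(γ * ((j:ℝ) * m))) * ((2:ℝ) ^ (j * m) * ((2:ℝ) ^ (n * m))⁻¹) :=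
          mul_le_mul_of_nonneg_left hdiff hw
      _ = ((2:ℝ) ^ (-(γ * ((j:ℝ) * m))) * (2:ℝ) ^ (j * m : ℕ)) * ((2:ℝ) ^ (n * m))⁻¹ := by
          ring
      _ = R ^ j * ((2:ℝ) ^ (n * m))⁻¹ := by rw [rpow_pow_id]
  have hgeom : ∑ j ∈ Finset.range n, R ^ j ≤ 16/15 * R ^ n / R := by
    rw [geom_sum_eq (by linarith : R ≠ 1), div_le_div_iff₀ (by linarith) hRpos]
    have hpow : (1:ℝ) ≤ R ^ n := one_le_pow₀ (by linarith)
    nlinarith [mul_le_mul_of_nonneg_right hR16 (pow_nonneg hRpos.le n)]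
  calc sawFpartial dd m γ n x - sawFpartial dd m γ n y
      = ∑ j ∈ Finset.range n, ((2:ℝ) ^ (-(γ * ((j:ℝ) * m))) * sawG dd m j x
          - (2:ℝ) ^ (-(γ * ((j:ℝ) * m))) * sawG dd m j y) := by
        rw [sawFpartial, sawFpartial, ← Finset.sum_sub_distrib]
    _ ≤ ∑ j ∈ Finset.range n, R ^ j * ((2:ℝ) ^ (n * m))⁻¹ := Finset.sum_le_sum key
    _ = (∑ j ∈ Finset.range n, R ^ j) * ((2:ℝ) ^ (n * m))⁻¹ := by rw [← Finset.sum_mul]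
    _ ≤ (16/15 * R ^ n / R) * ((2:ℝ) ^ (n * m))⁻¹ :=
        mul_le_mul_of_nonneg_right hgeom (by positivity)
    _ = (16/15 / R) * (R ^ n * ((2:ℝ) ^ (n * m))⁻¹) := by ring
    _ = (16/15 / R) * (2:ℝ) ^ (-(γ * ((m:ℝ) * n))) := by rw [Rn_cinv]
    _ ≤ (1/15) * (2:ℝ) ^ (-(γ * ((m:ℝ) * n))) := by
        have h1 : 16/15 / R ≤ 1/15 := by
          rw [div_le_iff₀ hRpos]; nlinarith
        exact mul_le_mul_of_nonneg_right h1 (Real.rpow_pos_of_pos two_pos _).le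

end Osc

end SawAux

namespace SawAux

section Bounds

variable {dd m n : ℕ} {γ : ℝ} {k : Fin dd → Fin (2 ^ (n * m))}

lemma summable_terms (hm1 : 1 ≤ (m:ℝ) * γ) (x : Fin dd → ℝ) :
    Summable (fun j : ℕ => (2:ℝ) ^ (-(γ * ((j:ℝ) * m))) * sawG dd m j x) := by
  set r : ℝ := (2:ℝ) ^ (-(γ * (m:ℝ))) with hr
  have hr0 : 0 < r := Real.rpow_pos_of_pos two_pos _
  have hr1 : r < 1 := Real.rpow_lt_one_of_one_lt_of_neg one_lt_two (by nlinarith)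
  refine Summable.of_nonneg_of_le
    (fun j => mul_nonneg (Real.rpow_pos_of_pos two_pos _).le (sawG_nonneg _ _ _ _))
    (fun j => ?_) ((summable_geometric_of_lt_one hr0.le hr1).mul_right (1/2))
  rw [rpow_geom_id γ m j, ← hr]
  have := mul_le_mul_of_nonneg_left (sawG_le_half dd m j x) (pow_nonneg hr0.le j)
  linarith

lemma summable_shift (hm1 : 1 ≤ (m:ℝ) * γ) (x : Fin dd → ℝ) (n : ℕ) :
    Summable (fun j : ℕ => (2:ℝ) ^ (-(γ * (((j + n : ℕ):ℝ) * m))) * sawG dd m (j + n) x) :=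
  (summable_nat_add_iff
    (f := fun j : ℕ => (2:ℝ) ^ (-(γ * ((j:ℝ) * m))) * sawG dd m j x) n).2
    (summable_terms hm1 x)

lemma f_split (hm1 : 1 ≤ (m:ℝ) * γ) (x : Fin dd → ℝ) (n : ℕ) :
    sawF dd m γ x = sawFpartial dd m γ n x
      + ∑' j : ℕ, (2:ℝ) ^ (-(γ * (((j + n : ℕ):ℝ) * m))) * sawG dd m (j + n) x :=
  (Summable.sum_add_tsum_nat_add n (summable_terms hm1 x)).symm

lemma tail_le (hm1 : 1 ≤ (m:ℝ) * γ) (x : Fin dd → ℝ) (n : ℕ) :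
    ∑' j : ℕ, (2:ℝ) ^ (-(γ * (((j + n : ℕ):ℝ) * m))) * sawG dd m (j + n) x
      ≤ (2:ℝ) ^ (-(γ * ((m:ℝ) * n))) := by
  set r : ℝ := (2:ℝ) ^ (-(γ * (m:ℝ))) with hr
  have hr0 : 0 < r := Real.rpow_pos_of_pos two_pos _
  have hr1 : r < 1 := Real.rpow_lt_one_of_one_lt_of_neg one_lt_two (by nlinarith)
  have hrhalf : r ≤ 1/2 := by
    rw [hr, show (1/2:ℝ) = (2:ℝ) ^ (-1:ℝ) by
      rw [Real.rpow_neg_one]; norm_num]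
    exact (Real.rpow_le_rpow_left_iff one_lt_two).2 (by nlinarith)
  have hbound : ∀ j : ℕ,
      (2:ℝ) ^ (-(γ * (((j + n : ℕ):ℝ) * m))) * sawG dd m (j + n) x
        ≤ (1/2 * r ^ n) * r ^ j := by
    intro j
    rw [rpow_geom_id γ m (j + n), ← hr]
    have hle := mul_le_mul_of_nonneg_left (sawG_le_half dd m (j + n) x)
      (pow_nonneg hr0.le (j + n))
    have hpa : r ^ (j + n) = r ^ j * r ^ n := pow_add r j n
    rw [hpa] at hle
    rw [hpa]
    linarith
  have hsum2 : Summable (fun j : ℕ => (1/2 * r ^ n) * r ^ j) :=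
    (summable_geometric_of_lt_one hr0.le hr1).mul_left _
  have h1 : ∑' j : ℕ, (2:ℝ) ^ (-(γ * (((j + n : ℕ):ℝ) * m))) * sawG dd m (j + n) x
      ≤ ∑' j : ℕ, (1/2 * r ^ n) * r ^ j :=
    Summable.tsum_le_tsum hbound (summable_shift hm1 x n) hsum2
  have h2 : ∑' j : ℕ, (1/2 * r ^ n) * r ^ j = 1/2 * r ^ n * (1 - r)⁻¹ := by
    rw [tsum_mul_left, tsum_geometric_of_lt_one hr0.le hr1]
  have h3 : (1 - r)⁻¹ ≤ 2 := by
    have hh : (1/2:ℝ) ≤ 1 - r := by linarith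
    calc (1 - r)⁻¹ ≤ (1/2:ℝ)⁻¹ := by
          apply inv_anti₀ (by norm_num) hh
      _ = 2 := by norm_num
  have h4 : 1/2 * r ^ n * (1 - r)⁻¹ ≤ r ^ n := by
    nlinarith [pow_nonneg hr0.le n, pow_pos hr0 n]
  have h5 : r ^ n = (2:ℝ) ^ (-(γ * ((m:ℝ) * n))) := by
    rw [hr, ← Real.rpow_natCast ((2:ℝ) ^ (-(γ * (m:ℝ)))) n,
      ← Real.rpow_mul (by norm_num : (0:ℝ) ≤ 2)]
    congr 1
    ring
  linarith [h1, h2.le, h4, h5.le]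

lemma tail_ge (hm1 : 1 ≤ (m:ℝ) * γ) (x : Fin dd → ℝ) (n : ℕ) :
    (2:ℝ) ^ (-(γ * ((n:ℝ) * m))) * sawG dd m n x
      ≤ ∑' j : ℕ, (2:ℝ) ^ (-(γ * (((j + n : ℕ):ℝ) * m))) * sawG dd m (j + n) x := by
  have h := Summable.le_tsum (summable_shift hm1 x n) 0
    (fun j _ => mul_nonneg (Real.rpow_pos_of_pos two_pos _).le (sawG_nonneg _ _ _ _))
  simp only [zero_add] at h
  exact h

lemma Q_nonempty_mem : (fun i => ((k i : ℝ) + 1/2) / 2 ^ (n * m)) ∈ sawQ dd m n k := by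
  intro i
  have hc : (0:ℝ) < 2 ^ (n * m) := by positivity
  have key : 2 ^ (n * m) * (((k i : ℝ) + 1/2) / 2 ^ (n * m)) = (k i : ℝ) + 1/2 := by
    field_simp
  dsimp only
  rw [key]
  constructor <;> linarith

lemma partial_nonneg (N : ℕ) (x : Fin dd → ℝ) : 0 ≤ sawFpartial dd m γ N x :=
  Finset.sum_nonneg fun j _ =>
    mul_nonneg (Real.rpow_pos_of_pos two_pos _).le (sawG_nonneg _ _ _ _)

lemma bddAbove_partial (hγ2 : γ < 1) (hm2 : 4 ≤ (m:ℝ) * (1 - γ)) :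
    BddAbove (sawFpartial dd m γ n '' sawQ dd m n k) := by
  refine ⟨sawFpartial dd m γ n (fun i => ((k i : ℝ) + 1/2) / 2 ^ (n * m))
    + (1/15) * (2:ℝ) ^ (-(γ * ((m:ℝ) * n))), ?_⟩
  rintro _ ⟨y, hy, rfl⟩
  linarith [partial_osc hγ2 hm2 hy (Q_nonempty_mem (k := k))]

lemma le_A (hγ2 : γ < 1) (hm2 : 4 ≤ (m:ℝ) * (1 - γ)) {x : Fin dd → ℝ}
    (hx : x ∈ sawQ dd m n k) : sawFpartial dd m γ n x ≤ sawA dd m γ n k :=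
  le_csSup (bddAbove_partial hγ2 hm2) (Set.mem_image_of_mem _ hx)

lemma A_le (hγ2 : γ < 1) (hm2 : 4 ≤ (m:ℝ) * (1 - γ)) {x : Fin dd → ℝ}
    (hx : x ∈ sawQ dd m n k) :
    sawA dd m γ n k ≤ sawFpartial dd m γ n x + (1/15) * (2:ℝ) ^ (-(γ * ((m:ℝ) * n))) := by
  refine csSup_le (Set.Nonempty.image _ ⟨_, Q_nonempty_mem (k := k)⟩) ?_
  rintro _ ⟨y, hy, rfl⟩
  linarith [partial_osc hγ2 hm2 hy hx]

lemma A_nonneg (hγ2 : γ < 1) (hm2 : 4 ≤ (m:ℝ) * (1 - γ)) : 0 ≤ sawA dd m γ n k :=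
  le_trans (partial_nonneg n _) (le_A hγ2 hm2 (Q_nonempty_mem (k := k)))

lemma f_le_A (hγ2 : γ < 1) (hm1 : 1 ≤ (m:ℝ) * γ) (hm2 : 4 ≤ (m:ℝ) * (1 - γ))
    {x : Fin dd → ℝ} (hx : x ∈ sawQ dd m n k) :
    sawF dd m γ x ≤ sawA dd m γ n k + (2:ℝ) ^ (-(γ * ((m:ℝ) * n))) := by
  rw [f_split hm1 x n]
  linarith [le_A hγ2 hm2 hx, tail_le hm1 x n]

lemma A_le_f (hγ2 : γ < 1) (hm1 : 1 ≤ (m:ℝ) * γ) (hm2 : 4 ≤ (m:ℝ) * (1 - γ))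
    {x : Fin dd → ℝ}
    (hx : ∀ i, (k i : ℝ) + 1/4 < 2 ^ (n * m) * x i ∧ 2 ^ (n * m) * x i < (k i : ℝ) + 3/4) :
    sawA dd m γ n k + (1/8) * (2:ℝ) ^ (-(γ * ((m:ℝ) * n))) ≤ sawF dd m γ x := by
  have hxQ : x ∈ sawQ dd m n k :=
    fun i => ⟨by linarith [(hx i).1], by linarith [(hx i).2]⟩
  have hwn : (2:ℝ) ^ (-(γ * ((n:ℝ) * m))) = (2:ℝ) ^ (-(γ * ((m:ℝ) * n))) := by
    congr 1; ring
  have hg := sawG_middle hx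
  have htail := tail_ge hm1 x n
  have hAle := A_le hγ2 hm2 hxQ
  have ht0 : (0:ℝ) ≤ (2:ℝ) ^ (-(γ * ((m:ℝ) * n))) := (Real.rpow_pos_of_pos two_pos _).le
  rw [f_split hm1 x n]
  rw [hwn] at htail
  nlinarith [htail, hg, hAle, ht0,
    mul_le_mul_of_nonneg_left hg (ht0 : (0:ℝ) ≤ (2:ℝ) ^ (-(γ * ((m:ℝ) * n))))]

lemma f_measurable (hm1 : 1 ≤ (m:ℝ) * γ) : Measurable (sawF dd m γ) := by
  apply measurable_of_tendsto_metrizable (f := fun N => sawFpartial dd m γ N)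
  · intro N
    exact (continuous_finset_sum _ fun j _ =>
      continuous_const.mul (sawG_continuous dd m j)).measurable
  · rw [tendsto_pi_nhds]
    intro x
    exact (summable_terms hm1 x).hasSum.tendsto_sum_nat

end Bounds

end SawAux

namespace SawAux

open MeasureTheory

lemma ico_comp (f : ℝ → ℝ) {T b : ℝ} (A : ℝ) (hT : 0 < T) (hb : 0 ≤ b) :
    ∫ t in Set.Ico A (A + b), f (T * (t - A)) = T⁻¹ * ∫ t in (0:ℝ)..(T*b), f t := by
  rw [MeasureTheory.integral_Ico_eq_integral_Ioo, ← MeasureTheory.integral_Ioc_eq_integral_Ioo,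
    ← intervalIntegral.integral_of_le (by linarith : A ≤ A + b),
    intervalIntegral.integral_comp_sub_right (fun t => f (T * t)) A,
    show A - A = (0:ℝ) by ring, show A + b - A = b by ring,
    intervalIntegral.integral_comp_mul_left f (ne_of_gt hT), smul_eq_mul, mul_zero]

lemma rpow_inv_pow_id (dd n m : ℕ) :
    (((2:ℝ) ^ (n * m))⁻¹) ^ dd = (2:ℝ) ^ (-((dd:ℝ) * ((m:ℝ) * n))) := by
  have h1 : ((2:ℝ) ^ (n * m : ℕ))⁻¹ = (2:ℝ) ^ (-((n * m : ℕ):ℝ)) := by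
    rw [← Real.rpow_natCast (2:ℝ) (n * m), ← Real.rpow_neg (by norm_num : (0:ℝ) ≤ 2)]
  rw [h1, ← Real.rpow_natCast ((2:ℝ) ^ (-((n * m : ℕ):ℝ))) dd,
    ← Real.rpow_mul (by norm_num : (0:ℝ) ≤ 2)]
  congr 1
  push_cast
  ring

lemma rpow_half_inv_pow_id (dd n m : ℕ) :
    ((((2:ℝ) ^ (n * m))⁻¹) / 2) ^ dd
      = (2:ℝ) ^ (-(dd:ℝ)) * (2:ℝ) ^ (-((dd:ℝ) * ((m:ℝ) * n))) := by
  have h1 : ((2:ℝ) ^ (n * m : ℕ))⁻¹ = (2:ℝ) ^ (-((n * m : ℕ):ℝ)) := by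
    rw [← Real.rpow_natCast (2:ℝ) (n * m), ← Real.rpow_neg (by norm_num : (0:ℝ) ≤ 2)]
  have h2 : (2:ℝ) ^ (-((n * m : ℕ):ℝ)) / 2 = (2:ℝ) ^ (-((n * m : ℕ):ℝ) + (-1)) := by
    rw [Real.rpow_add two_pos, Real.rpow_neg_one]
    ring
  rw [h1, h2, ← Real.rpow_natCast ((2:ℝ) ^ (-((n * m : ℕ):ℝ) + (-1))) dd,
    ← Real.rpow_mul (by norm_num : (0:ℝ) ≤ 2), ← Real.rpow_add two_pos]
  congr 1
  push_cast
  ring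

lemma main_aux (dd m : ℕ) (γ : ℝ) (hγ2 : γ < 1)
    (hm1 : 1 ≤ (m : ℝ) * γ) (hm2 : 4 ≤ (m : ℝ) * (1 - γ))
    (n : ℕ) (k : Fin dd → Fin (2 ^ (n * m))) :
    ((2 : ℝ) ^ (-(dd : ℝ)) * ∫ t in (0 : ℝ)..(1 / 8), Real.sin t ^ 2) *
        (2 : ℝ) ^ (-((dd : ℝ) * ((m : ℝ) * n))) *
        (2 : ℝ) ^ (-(γ * ((m : ℝ) * n))) ≤
      (∫ p in sawOmega dd m γ, (sawU dd m γ n k p) ^ 2) ∧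
    (∫ p in sawOmega dd m γ, (sawGradU dd m γ n k p) ^ 2) ≤
      (∫ t in (0 : ℝ)..1, Real.cos t ^ 2) *
        (2 : ℝ) ^ (-((dd : ℝ) * ((m : ℝ) * n))) *
        (2 : ℝ) ^ (γ * ((m : ℝ) * n)) := by
  set T : ℝ := (2 : ℝ) ^ (γ * ((m : ℝ) * n)) with hT
  set A : ℝ := sawA dd m γ n k with hA
  have hTpos : 0 < T := Real.rpow_pos_of_pos two_pos _
  have hTinv : (2:ℝ) ^ (-(γ * ((m:ℝ) * n))) = T⁻¹ := by
    rw [hT, ← Real.rpow_neg (by norm_num : (0:ℝ) ≤ 2)]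
  have hTinv0 : 0 < T⁻¹ := inv_pos.2 hTpos
  have hc : (0:ℝ) < 2 ^ (n * m) := by positivity
  have hAnn : 0 ≤ A := A_nonneg hγ2 hm2
  set S : Set ((Fin dd → ℝ) × ℝ) :=
    {q : (Fin dd → ℝ) × ℝ | q.1 ∈ sawQ dd m n k ∧ sawA dd m γ n k ≤ q.2} with hS
  have hSprod : S = sawQ dd m n k ×ˢ Set.Ici A := by
    ext p
    simp [hS, Set.mem_prod, Set.mem_Ici, hA]
  -- the cube as a product of intervals
  have hQpi : sawQ dd m n k
      = Set.pi Set.univ (fun i => Set.Ioo ((k i : ℝ) / 2 ^ (n * m))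
          (((k i : ℝ) + 1) / 2 ^ (n * m))) := by
    ext x
    simp only [sawQ, Set.mem_setOf_eq, Set.mem_pi, Set.mem_univ, forall_true_left, Set.mem_Ioo]
    refine forall_congr' fun i => ?_
    rw [div_lt_iff₀ hc, lt_div_iff₀ hc]
    constructor <;> intro h <;> constructor <;> nlinarith [h.1, h.2]
  have hQmeas : MeasurableSet (sawQ dd m n k) := by
    rw [hQpi]; exact MeasurableSet.univ_pi fun i => measurableSet_Ioo
  have hSmeas : MeasurableSet S := by
    rw [hSprod]; exact hQmeas.prod measurableSet_Ici
  have hvolQ : volume (sawQ dd m n k) = ENNReal.ofReal (((2:ℝ) ^ (n * m))⁻¹) ^ dd := by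
    rw [hQpi, volume_pi_pi]
    simp only [Real.volume_Ioo]
    rw [Finset.prod_congr rfl (fun i _ => by
      rw [show ((k i : ℝ) + 1) / 2 ^ (n * m) - (k i : ℝ) / 2 ^ (n * m)
        = ((2:ℝ) ^ (n * m))⁻¹ by field_simp; ring])]
    rw [Finset.prod_const, Finset.card_univ, Fintype.card_fin]
  -- the middle-half cube
  set Q' : Set (Fin dd → ℝ) :=
    Set.pi Set.univ (fun i => Set.Ioo (((k i : ℝ) + 1/4) / 2 ^ (n * m))
      (((k i : ℝ) + 3/4) / 2 ^ (n * m))) with hQ'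
  have hQ'mid : ∀ x ∈ Q', ∀ i, (k i : ℝ) + 1/4 < 2 ^ (n * m) * x i ∧
      2 ^ (n * m) * x i < (k i : ℝ) + 3/4 := by
    intro x hx i
    have h := hx i (Set.mem_univ i)
    simp only [Set.mem_Ioo] at h
    rw [div_lt_iff₀ hc, lt_div_iff₀ hc] at h
    constructor <;> nlinarith [h.1, h.2]
  have hQ'sub : Q' ⊆ sawQ dd m n k := by
    intro x hx i
    have h := hQ'mid x hx i
    constructor <;> linarith [h.1, h.2]
  have hQ'meas : MeasurableSet Q' := MeasurableSet.univ_pi fun i => measurableSet_Ioo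
  have hvolQ' : volume Q' = ENNReal.ofReal ((((2:ℝ) ^ (n * m))⁻¹) / 2) ^ dd := by
    rw [hQ', volume_pi_pi]
    simp only [Real.volume_Ioo]
    rw [Finset.prod_congr rfl (fun i _ => by
      rw [show ((k i : ℝ) + 3/4) / 2 ^ (n * m) - ((k i : ℝ) + 1/4) / 2 ^ (n * m)
        = (((2:ℝ) ^ (n * m))⁻¹) / 2 by field_simp; ring])]
    rw [Finset.prod_const, Finset.card_univ, Fintype.card_fin]
  -- the essential support of u within Ω
  set E : Set ((Fin dd → ℝ) × ℝ) :=
    (sawQ dd m n k ×ˢ Set.Ici A) ∩ {p : (Fin dd → ℝ) × ℝ | p.2 < sawF dd m γ p.1} with hE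
  have hΩS : sawOmega dd m γ ∩ S = E := by
    ext p
    constructor
    · rintro ⟨hΩ, hpS⟩
      obtain ⟨hpQ, hpA⟩ := hpS
      rcases hΩ with ⟨_, _, hlt⟩ | ⟨_, _, hneg⟩
      · exact ⟨⟨hpQ, hpA⟩, hlt⟩
      · exact absurd (lt_of_lt_of_le hneg (le_trans hAnn hpA)) (lt_irrefl _)
    · rintro ⟨⟨hpQ, hpA⟩, hlt⟩
      exact ⟨Or.inl ⟨fun i => mem_Q_unit hpQ i, le_trans hAnn hpA, hlt⟩, hpQ, hpA⟩
  set B : Set ((Fin dd → ℝ) × ℝ) := sawQ dd m n k ×ˢ Set.Ico A (A + T⁻¹) with hB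
  set R' : Set ((Fin dd → ℝ) × ℝ) := Q' ×ˢ Set.Ico A (A + 8⁻¹ * T⁻¹) with hR'
  have hEB : E ⊆ B := by
    rintro p ⟨⟨hpQ, hpA⟩, hlt⟩
    refine ⟨hpQ, hpA, ?_⟩
    have := f_le_A hγ2 hm1 hm2 hpQ
    rw [hTinv] at this
    exact lt_of_lt_of_le hlt this
  have hR'E : R' ⊆ E := by
    rintro p ⟨hpQ', hpI⟩
    obtain ⟨hpA, hplt⟩ := hpI
    refine ⟨⟨hQ'sub hpQ', hpA⟩, ?_⟩
    have := A_le_f hγ2 hm1 hm2 (hQ'mid p.1 hpQ')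
    rw [hTinv] at this
    calc p.2 < A + 8⁻¹ * T⁻¹ := hplt
      _ = A + 1/8 * T⁻¹ := by ring
      _ ≤ sawF dd m γ p.1 := this
  have hf_meas : Measurable (sawF dd m γ) := f_measurable hm1
  have hEmeas : MeasurableSet E :=
    (hQmeas.prod measurableSet_Ici).inter
      (measurableSet_lt measurable_snd (hf_meas.comp measurable_fst))
  have hBfin : volume B < ⊤ := by
    rw [hB, MeasureTheory.Measure.volume_eq_prod, Measure.prod_prod]
    exact ENNReal.mul_lt_top
      (by rw [hvolQ]; exact ENNReal.pow_lt_top ENNReal.ofReal_lt_top)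
      (by rw [Real.volume_Ico]; exact ENNReal.ofReal_lt_top)
  constructor
  · -- lower bound for ∫ u²
    have hu_sq : ∀ p, (sawU dd m γ n k p) ^ 2
        = Set.indicator S (fun q => Real.sin (T * (q.2 - A)) ^ 2) p := by
      intro p
      by_cases hp : p ∈ S
      · rw [sawU, Set.indicator_of_mem hp, Set.indicator_of_mem hp]
      · rw [sawU, Set.indicator_of_notMem hp, Set.indicator_of_notMem hp]
        norm_num
    have hsin_cont : Continuous (fun p : (Fin dd → ℝ) × ℝ => Real.sin (T * (p.2 - A)) ^ 2) := by
      fun_prop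
    have hIntB : IntegrableOn (fun p : (Fin dd → ℝ) × ℝ => Real.sin (T * (p.2 - A)) ^ 2)
        B volume := by
      refine Integrable.mono' (g := fun _ => (1:ℝ))
        (integrableOn_const hBfin.ne)
        hsin_cont.aestronglyMeasurable.restrict
        (Filter.Eventually.of_forall fun p => ?_)
      rw [Real.norm_eq_abs, abs_of_nonneg (sq_nonneg _)]
      exact Real.sin_sq_le_one _
    have hIntE : IntegrableOn (fun p : (Fin dd → ℝ) × ℝ => Real.sin (T * (p.2 - A)) ^ 2)
        E volume := hIntB.mono_set hEB
    have hmono : ∫ p in R', Real.sin (T * (p.2 - A)) ^ 2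
        ≤ ∫ p in E, Real.sin (T * (p.2 - A)) ^ 2 :=
      setIntegral_mono_set hIntE
        (Filter.Eventually.of_forall fun p => sq_nonneg _)
        (HasSubset.Subset.eventuallyLE hR'E)
    have hIR' : ∫ p in R', Real.sin (T * (p.2 - A)) ^ 2
        = (((((2:ℝ) ^ (n * m))⁻¹) / 2) ^ dd) *
          (T⁻¹ * ∫ t in (0:ℝ)..(1/8), Real.sin t ^ 2) := by
      rw [hR', MeasureTheory.Measure.volume_eq_prod]
      have hprod := MeasureTheory.setIntegral_prod_mul (μ := volume) (ν := volume)
        (fun _ : Fin dd → ℝ => (1:ℝ)) (fun t => Real.sin (T * (t - A)) ^ 2)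
        Q' (Set.Ico A (A + 8⁻¹ * T⁻¹))
      simp only [one_mul] at hprod
      rw [hprod, setIntegral_const]
      have h1d := ico_comp (fun t => Real.sin t ^ 2) A hTpos
        (by positivity : (0:ℝ) ≤ 8⁻¹ * T⁻¹)
      rw [show T * (8⁻¹ * T⁻¹) = (1/8 : ℝ) by field_simp] at h1d
      rw [h1d, measureReal_def, hvolQ', ENNReal.toReal_pow, ENNReal.toReal_ofReal (by positivity)]
      rw [smul_eq_mul, mul_one]
    refine le_trans (le_of_eq ?_) (by
      calc ∫ p in R', Real.sin (T * (p.2 - A)) ^ 2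
          ≤ ∫ p in E, Real.sin (T * (p.2 - A)) ^ 2 := hmono
        _ = ∫ p in sawOmega dd m γ ∩ S, Real.sin (T * (p.2 - A)) ^ 2 := by rw [hΩS]
        _ = ∫ p in sawOmega dd m γ,
              Set.indicator S (fun q => Real.sin (T * (q.2 - A)) ^ 2) p := by
            rw [setIntegral_indicator hSmeas]
        _ = ∫ p in sawOmega dd m γ, (sawU dd m γ n k p) ^ 2 := by
            simp only [hu_sq])
    rw [hIR', rpow_half_inv_pow_id dd n m, hTinv]
    ring
  · -- upper bound for ∫ |∇u|²
    have hg_sq : ∀ p, (sawGradU dd m γ n k p) ^ 2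
        = Set.indicator S (fun q => (T * Real.cos (T * (q.2 - A))) ^ 2) p := by
      intro p
      by_cases hp : p ∈ S
      · rw [sawGradU, Set.indicator_of_mem hp, Set.indicator_of_mem hp]
      · rw [sawGradU, Set.indicator_of_notMem hp, Set.indicator_of_notMem hp]
        norm_num
    have hcos_cont : Continuous
        (fun p : (Fin dd → ℝ) × ℝ => (T * Real.cos (T * (p.2 - A))) ^ 2) := by
      fun_prop
    have hIntB : IntegrableOn
        (fun p : (Fin dd → ℝ) × ℝ => (T * Real.cos (T * (p.2 - A))) ^ 2) B volume := by
      refine Integrable.mono' (g := fun _ => T ^ 2)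
        (integrableOn_const hBfin.ne)
        hcos_cont.aestronglyMeasurable.restrict
        (Filter.Eventually.of_forall fun p => ?_)
      rw [Real.norm_eq_abs, abs_of_nonneg (sq_nonneg _), mul_pow]
      show T ^ 2 * Real.cos (T * (p.2 - A)) ^ 2 ≤ T ^ 2
      nlinarith [Real.cos_sq_le_one (T * (p.2 - A)), sq_nonneg T,
        sq_nonneg (Real.cos (T * (p.2 - A)))]
    have hmono : ∫ p in E, (T * Real.cos (T * (p.2 - A))) ^ 2
        ≤ ∫ p in B, (T * Real.cos (T * (p.2 - A))) ^ 2 :=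
      setIntegral_mono_set hIntB
        (Filter.Eventually.of_forall fun p => sq_nonneg _)
        (HasSubset.Subset.eventuallyLE hEB)
    have hIB : ∫ p in B, (T * Real.cos (T * (p.2 - A))) ^ 2
        = ((((2:ℝ) ^ (n * m))⁻¹) ^ dd) *
          (T ^ 2 * (T⁻¹ * ∫ t in (0:ℝ)..1, Real.cos t ^ 2)) := by
      rw [hB, MeasureTheory.Measure.volume_eq_prod]
      have hprod := MeasureTheory.setIntegral_prod_mul (μ := volume) (ν := volume)
        (fun _ : Fin dd → ℝ => (1:ℝ)) (fun t => (T * Real.cos (T * (t - A))) ^ 2)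
        (sawQ dd m n k) (Set.Ico A (A + T⁻¹))
      simp only [one_mul] at hprod
      rw [hprod, setIntegral_const]
      have heq : ∫ t in Set.Ico A (A + T⁻¹), (T * Real.cos (T * (t - A))) ^ 2
          = T ^ 2 * ∫ t in Set.Ico A (A + T⁻¹), Real.cos (T * (t - A)) ^ 2 := by
        simp_rw [mul_pow]
        rw [MeasureTheory.integral_const_mul]
      have h1d := ico_comp (fun t => Real.cos t ^ 2) A hTpos (le_of_lt hTinv0)
      rw [mul_inv_cancel₀ (ne_of_gt hTpos)] at h1d
      rw [heq, h1d, measureReal_def, hvolQ, ENNReal.toReal_pow, ENNReal.toReal_ofReal (by positivity)]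
      rw [smul_eq_mul, mul_one]
    calc ∫ p in sawOmega dd m γ, (sawGradU dd m γ n k p) ^ 2
        = ∫ p in sawOmega dd m γ,
            Set.indicator S (fun q => (T * Real.cos (T * (q.2 - A))) ^ 2) p := by
          simp only [hg_sq]
      _ = ∫ p in sawOmega dd m γ ∩ S, (T * Real.cos (T * (p.2 - A))) ^ 2 := by
          rw [setIntegral_indicator hSmeas]
      _ = ∫ p in E, (T * Real.cos (T * (p.2 - A))) ^ 2 := by rw [hΩS]
      _ ≤ ∫ p in B, (T * Real.cos (T * (p.2 - A))) ^ 2 := hmono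
      _ = (∫ t in (0:ℝ)..1, Real.cos t ^ 2) *
            (2 : ℝ) ^ (-((dd : ℝ) * ((m : ℝ) * n))) * T := by
          rw [hIB, rpow_inv_pow_id dd n m]
          field_simp
      _ = (∫ t in (0:ℝ)..1, Real.cos t ^ 2) *
            (2 : ℝ) ^ (-((dd : ℝ) * ((m : ℝ) * n))) *
            (2 : ℝ) ^ (γ * ((m : ℝ) * n)) := by rw [hT]

end SawAux

/-- Lemma 7.4(i): the test function `u_{n,k}` satisfies
`∫_Ω |u_{n,k}|² ≥ b₂·2^{−(d−1)mn}·2^{−γmn}` and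
`∫_Ω |∇u_{n,k}|² ≤ b_∇·2^{−(d−1)mn}·2^{γmn}`, where
`b₂ = 2^{−(d−1)}·∫₀^{1/8} sin²t dt` and `b_∇ = ∫₀¹ cos²t dt`. -/
theorem sawU_energy_bounds (d m : ℕ) (γ : ℝ) (hd : 2 ≤ d)
    (hγ1 : ((d : ℝ) - 1) / d < γ) (hγ2 : γ < 1)
    (hm1 : 1 ≤ (m : ℝ) * γ) (hm2 : 4 ≤ (m : ℝ) * (1 - γ))
    (n : ℕ) (k : Fin (d - 1) → Fin (2 ^ (n * m))) :
    ((2 : ℝ) ^ (-((d : ℝ) - 1)) * ∫ t in (0 : ℝ)..(1 / 8), Real.sin t ^ 2) *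
        (2 : ℝ) ^ (-(((d : ℝ) - 1) * ((m : ℝ) * n))) *
        (2 : ℝ) ^ (-(γ * ((m : ℝ) * n))) ≤
      (∫ p in sawOmega (d - 1) m γ, (sawU (d - 1) m γ n k p) ^ 2) ∧
    (∫ p in sawOmega (d - 1) m γ, (sawGradU (d - 1) m γ n k p) ^ 2) ≤
      (∫ t in (0 : ℝ)..1, Real.cos t ^ 2) *
        (2 : ℝ) ^ (-(((d : ℝ) - 1) * ((m : ℝ) * n))) *
        (2 : ℝ) ^ (γ * ((m : ℝ) * n)) := by
  have hcast : ((d : ℝ) - 1) = (((d - 1 : ℕ) : ℝ)) := by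
    have h1 : 1 ≤ d := by omega
    push_cast [h1]
    ring
  rw [hcast]
  exact SawAux.main_aux (d - 1) m γ hγ2 hm1 hm2 n k
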